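/- A function φ : [0,∞) → [0,1) is an MT-function if and only if for every nonincreasing sequence {x_n} in [0,∞), sup_{n} φ(x_n) < 1. -/

import Mathlib

open Filter Set Topology

/-- `MTfun φ`: φ is an MT-function, i.e. `limsup_{s→t⁺} φ(s) < 1` for all `t ≥ 0`. -/
def MTfun (φ : ℝ → ℝ) : Prop :=
  ∀ t : ℝ, 0 ≤ t → Filter.limsup φ (nhdsWithin t (Set.Ioi t)) < 1

/-- `MTlfun λ μ`: μ is an MT(λ)-function, i.e. `limsup_{s→t⁺} μ(s) < λ` for all `t ≥ 0`. -/
def MTlfun (l : ℝ) (μ : ℝ → ℝ) : Prop :=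
  ∀ t : ℝ, 0 ≤ t → Filter.limsup μ (nhdsWithin t (Set.Ioi t)) < l

theorem stmt_6 (φ : ℝ → ℝ) (hmap : ∀ t : ℝ, 0 ≤ t → 0 ≤ φ t ∧ φ t < 1) :
    MTfun φ ↔ ∀ x : ℕ → ℝ, (∀ n, 0 ≤ x n) → (∀ n, x (n + 1) ≤ x n) →
      (⨆ n, φ (x n)) < 1 := by
  constructor
  · -- forward direction
    intro hMT x hx0 hxd
    have hanti : Antitone x := antitone_nat_of_succ_le hxd
    have hbdd : BddBelow (Set.range x) := ⟨0, by rintro _ ⟨n, rfl⟩; exact hx0 n⟩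
    set t : ℝ := ⨅ n, x n with ht
    have ht0 : 0 ≤ t := le_ciInf hx0
    have htle : ∀ n, t ≤ x n := fun n => ciInf_le hbdd n
    have htend : Tendsto x atTop (𝓝 t) := tendsto_atTop_ciInf hanti hbdd
    have hls := hMT t ht0
    obtain ⟨c, hlc, hc1⟩ := exists_between hls
    have hbound : IsBoundedUnder (· ≤ ·) (𝓝[>] t) φ := by
      refine ⟨1, eventually_map.mpr ?_⟩
      filter_upwards [self_mem_nhdsWithin] with s hs
      exact (hmap s (ht0.trans (le_of_lt hs))).2.le
    have hev : ∀ᶠ s in 𝓝[>] t, φ s < c := eventually_lt_of_limsup_lt hlc hbound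
    rw [Filter.Eventually] at hev
    rw [Metric.mem_nhdsWithin_iff] at hev
    obtain ⟨ε, hε, hball⟩ := hev
    -- eventually x n is within ε of t
    have hN : ∀ᶠ n in atTop, dist (x n) t < ε :=
      (Metric.tendsto_nhds.mp htend) ε hε
    obtain ⟨N, hNp⟩ := eventually_atTop.mp hN
    -- uniform bound
    set F : ℝ := (Finset.range (N + 1)).sup' (by simp) (fun n => φ (x n)) with hF
    set K : ℝ := max (max c (φ t)) F with hK
    have hKlt : K < 1 := by
      apply max_lt (max_lt hc1 (hmap t ht0).2)
      rw [hF, Finset.sup'_lt_iff]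
      intro n _
      exact (hmap (x n) (hx0 n)).2
    have hle : ∀ n, φ (x n) ≤ K := by
      intro n
      rcases le_or_gt n N with hn | hn
      · exact le_trans (Finset.le_sup' (fun n => φ (x n))
          (Finset.mem_range.mpr (Nat.lt_succ_of_le hn))) (le_max_right _ _)
      · rcases eq_or_lt_of_le (htle n) with heq | hlt
        · rw [← heq]
          exact le_trans (le_max_right c (φ t)) (le_max_left _ _)
        · have : φ (x n) < c := hball ⟨hNp n hn.le, hlt⟩
          exact le_trans this.le (le_trans (le_max_left _ _) (le_max_left _ _))
    exact lt_of_le_of_lt (ciSup_le hle) hKlt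
  · -- reverse direction
    intro hsup t ht0
    by_contra hc
    push_neg at hc
    have hne : (𝓝[>] t).NeBot := nhdsGT_neBot t
    have hge0 : ∀ᶠ s in 𝓝[>] t, (0:ℝ) ≤ φ s := by
      filter_upwards [self_mem_nhdsWithin] with s hs
      exact (hmap s (ht0.trans hs.le)).1
    have hcob : IsCoboundedUnder (· ≤ ·) (𝓝[>] t) φ :=
      IsBoundedUnder.isCoboundedUnder_le ⟨0, eventually_map.mpr (by
        filter_upwards [hge0] with s hs using hs)⟩
    have hfreq : ∀ (n : ℕ) (b : ℝ), t < b →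
        ∃ s, (t < s ∧ 1 - 1 / ((n : ℝ) + 1) < φ s) ∧ s < b := by
      intro n b hb
      have h1 : ¬ ∀ᶠ s in 𝓝[>] t, φ s ≤ 1 - 1 / ((n : ℝ) + 1) := by
        intro h
        have := limsup_le_of_le hcob h
        have hlt : 1 - 1 / ((n : ℝ) + 1) < 1 := by
          have : (0:ℝ) < 1 / ((n : ℝ) + 1) := by positivity
          linarith
        exact absurd (lt_of_le_of_lt this hlt) (not_lt.mpr hc)
      have hfr : ∃ᶠ s in 𝓝[>] t, 1 - 1 / ((n : ℝ) + 1) < φ s := by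
        rw [Filter.not_eventually] at h1
        exact h1.mono fun s hs => lt_of_not_ge hs
      have hIoo : Ioo t b ∈ 𝓝[>] t := Ioo_mem_nhdsGT_of_mem ⟨le_refl t, hb⟩
      obtain ⟨s, hs1, hs2⟩ := (hfr.and_eventually (eventually_of_mem hIoo fun s hs => hs)).exists
      exact ⟨s, ⟨hs2.1, hs1⟩, hs2.2⟩
    choose g hg1 hg2 using hfreq
    -- build the decreasing sequence
    let y : ℕ → {s : ℝ // t < s} := fun n =>
      Nat.rec ⟨g 0 (t + 1) (by linarith), (hg1 0 (t + 1) (by linarith)).1⟩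
        (fun m p => ⟨g (m + 1) p.1 p.2, (hg1 (m + 1) p.1 p.2).1⟩) n
    set x : ℕ → ℝ := fun n => (y n).1 with hxdef
    have hxt : ∀ n, t < x n := fun n => (y n).2
    have hx0 : ∀ n, 0 ≤ x n := fun n => le_of_lt (lt_of_le_of_lt ht0 (hxt n))
    have hxd : ∀ n, x (n + 1) ≤ x n := by
      intro n
      exact le_of_lt (hg2 (n + 1) (y n).1 (y n).2)
    have hφx : ∀ n : ℕ, 1 - 1 / ((n : ℝ) + 1) < φ (x n) := by
      intro n
      cases n with
      | zero => exact (hg1 0 (t + 1) (by linarith)).2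
      | succ m => exact (hg1 (m + 1) (y m).1 (y m).2).2
    have hM := hsup x hx0 hxd
    have hbddA : BddAbove (Set.range fun n => φ (x n)) :=
      ⟨1, by rintro _ ⟨n, rfl⟩; exact (hmap (x n) (hx0 n)).2.le⟩
    have hlow : ∀ n : ℕ, 1 - 1 / ((n : ℝ) + 1) ≤ ⨆ n, φ (x n) :=
      fun n => le_trans (hφx n).le (le_ciSup hbddA n)
    have htend : Tendsto (fun n : ℕ => 1 - 1 / ((n : ℝ) + 1)) atTop (𝓝 1) := by
      have := tendsto_one_div_add_atTop_nhds_zero_nat (𝕜 := ℝ)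
      have h2 := (tendsto_const_nhds (x := (1:ℝ)) (f := atTop)).sub this
      simpa using h2
    have : (1:ℝ) ≤ ⨆ n, φ (x n) := le_of_tendsto' htend hlow
    linarith
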